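/- Let p be a prime, let X and Y be profinite sets, and let R be a p-adically complete ℤ_p-algebra. For every ℤ_p-bilinear pairing B : C(X, ℤ_p) × C(Y, ℤ_p) → R there exists a unique R-valued measure μ on X × Y (i.e. a unique ℤ_p-linear map μ : C(X × Y, ℤ_p) → R) such that for all continuous f : X → ℤ_p and g : Y → ℤ_p one has μ((x,y) ↦ f(x)·g(y)) = B(f, g). -/

import Mathlib

open scoped Classical

namespace BFM

variable {p : ℕ} [Fact p.Prime]

noncomputable def zlift (p n : ℕ) [Fact p.Prime] (a : ZMod (p^n)) : ℤ_[p] := (a.val : ℤ_[p])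

lemma toZModPow_zlift (n : ℕ) (a : ZMod (p^n)) :
    PadicInt.toZModPow n (zlift p n a) = a := by
  haveI : NeZero (p^n) := ⟨pow_ne_zero n (Fact.out : p.Prime).ne_zero⟩
  simp [zlift, ZMod.natCast_val, ZMod.cast_id]

lemma dvd_iff_toZModPow_eq_zero {n : ℕ} {x : ℤ_[p]} :
    PadicInt.toZModPow n x = 0 ↔ (p : ℤ_[p])^n ∣ x := by
  rw [← RingHom.mem_ker, PadicInt.ker_toZModPow, Ideal.mem_span_singleton]

/-- division by `p^n` of a continuous function all of whose values are divisible. -/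
lemma exists_div_pow {Z : Type*} [TopologicalSpace Z] (h : C(Z, ℤ_[p])) (n : ℕ)
    (H : ∀ z, (p : ℤ_[p])^n ∣ h z) : ∃ c : C(Z, ℤ_[p]), h = (p : ℤ_[p])^n • c := by
  have hp0 : ((p : ℚ_[p])^n) ≠ 0 := by
    exact_mod_cast pow_ne_zero n (Nat.cast_ne_zero.mpr (Fact.out : p.Prime).ne_zero)
  have hb : ∀ z, ‖((h z : ℚ_[p]) / (p : ℚ_[p])^n)‖ ≤ 1 := by
    intro z
    have h1 : ‖h z‖ ≤ (p : ℝ)^(-n : ℤ) := by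
      rw [PadicInt.norm_le_pow_iff_mem_span_pow, Ideal.mem_span_singleton]
      exact H z
    rw [norm_div, Padic.norm_p_pow]
    rw [div_le_one (zpow_pos (by exact_mod_cast (Fact.out : p.Prime).pos) _)]
    exact h1
  refine ⟨⟨fun z => ⟨(h z : ℚ_[p]) / (p : ℚ_[p])^n, hb z⟩, ?_⟩, ?_⟩
  · apply Continuous.subtype_mk
    exact (continuous_subtype_val.comp h.continuous).div_const _
  · ext z
    simp only [ContinuousMap.smul_apply, ContinuousMap.coe_mk, smul_eq_mul]
    apply Subtype.ext
    rw [PadicInt.coe_mul]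
    push_cast
    rw [mul_comm]
    exact (div_mul_cancel₀ _ hp0).symm

lemma isOpen_fiber (n : ℕ) (a : ZMod (p^n)) :
    IsOpen {x : ℤ_[p] | PadicInt.toZModPow n x = a} := by
  rw [Metric.isOpen_iff]
  intro x hx
  refine ⟨(p:ℝ)^(-n:ℤ), zpow_pos (by exact_mod_cast (Fact.out : p.Prime).pos) _, fun y hy => ?_⟩
  have : (p : ℤ_[p])^n ∣ (y - x) := by
    rw [← Ideal.mem_span_singleton, ← PadicInt.norm_le_pow_iff_mem_span_pow]
    have := mem_ball_iff_norm.mp hy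
    exact le_of_lt this
  have h0 : PadicInt.toZModPow n (y - x) = 0 := dvd_iff_toZModPow_eq_zero.mpr this
  rw [map_sub, sub_eq_zero] at h0
  simpa [h0] using hx



section Ind

variable {Z : Type*} [TopologicalSpace Z]
variable {S : Type*} [TopologicalSpace S] [DiscreteTopology S]

/-- indicator of a fiber of a continuous map to a discrete space. -/
noncomputable def ind (p : ℕ) [Fact p.Prime] (s : C(Z, S)) (u : S) : C(Z, ℤ_[p]) :=
  ⟨fun z => if s z = u then 1 else 0,
    by
      have : Continuous fun v : S => if v = u then (1 : ℤ_[p]) else 0 :=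
        continuous_of_discreteTopology
      exact this.comp s.continuous⟩

lemma ind_apply (s : C(Z, S)) (u : S) (z : Z) :
    ind p s u z = if s z = u then 1 else 0 := rfl

lemma ind_eq_zero (s : C(Z, S)) (u : S) (hu : ∀ z, s z ≠ u) : ind p s u = 0 := by
  ext z; simp [ind_apply, hu z]

/-- Decomposition of a continuous function whose reduction mod `p^n` factors through a
finite discrete quotient. -/
lemma decomp {n : ℕ} [Fintype S] (s : C(Z, S)) (h : C(Z, ℤ_[p])) (ψ : S → ZMod (p^n))
    (hs : ∀ z, PadicInt.toZModPow n (h z) = ψ (s z)) :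
    ∃ c : C(Z, ℤ_[p]),
      h = (∑ u : S, zlift p n (ψ u) • ind p s u) + (p : ℤ_[p])^n • c := by
  have key : ∀ z, (p : ℤ_[p])^n ∣ (h - ∑ u : S, zlift p n (ψ u) • ind p s u) z := by
    intro z
    rw [← dvd_iff_toZModPow_eq_zero]
    have hv : (∑ u : S, zlift p n (ψ u) • ind p s u) z = zlift p n (ψ (s z)) := by
      simp only [ContinuousMap.sum_apply, ContinuousMap.smul_apply, ind_apply,
        smul_eq_mul, mul_ite, mul_one, mul_zero]
      simp [Finset.sum_ite_eq]
    rw [ContinuousMap.sub_apply, hv, map_sub, hs z, toZModPow_zlift, sub_self]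
  obtain ⟨c, hc⟩ := exists_div_pow (h - ∑ u : S, zlift p n (ψ u) • ind p s u) n key
  exact ⟨c, by linear_combination (norm := (ext z; simp; ring)) hc⟩

end Ind

section Crux

variable {X Y : Type*} [TopologicalSpace X] [TopologicalSpace Y]
variable {R : Type*} [CommRing R] [Algebra ℤ_[p] R]

lemma smul_mem_pow_span {n : ℕ} {a : ℤ_[p]} (r : R) (ha : (p : ℤ_[p])^n ∣ a) :
    a • r ∈ Ideal.span {(p : R)} ^ n := by
  obtain ⟨w, rfl⟩ := ha
  have h1 : ((p : ℤ_[p])^n * w) • r = (p : R)^n * (w • r) := by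
    rw [mul_smul, Algebra.smul_def, map_pow, map_natCast]
  rw [h1, Ideal.span_singleton_pow, Ideal.mem_span_singleton]
  exact Dvd.intro _ rfl

lemma crux (B : C(X, ℤ_[p]) →ₗ[ℤ_[p]] C(Y, ℤ_[p]) →ₗ[ℤ_[p]] R)
    {ι : Type*} [Fintype ι] (n : ℕ)
    (f : ι → C(X, ℤ_[p])) (g : ι → C(Y, ℤ_[p]))
    (H : ∀ (x : X) (y : Y), (p : ℤ_[p])^n ∣ ∑ i, f i x * g i y) :
    (∑ i, B (f i) (g i)) ∈ Ideal.span {(p : R)} ^ n := by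
  letI : TopologicalSpace (ZMod (p^n)) := ⊥
  haveI : DiscreteTopology (ZMod (p^n)) := ⟨rfl⟩
  set N : Submodule ℤ_[p] R :=
    Submodule.restrictScalars ℤ_[p] (Ideal.span {(p : R)} ^ n) with hN
  suffices hsuff : (∑ i, B (f i) (g i)) ∈ N by exact hsuff
  have hcontX : Continuous (fun x (i : ι) => PadicInt.toZModPow n (f i x)) := by
    apply continuous_pi
    intro i
    rw [continuous_discrete_rng]
    intro b
    exact (f i).continuous.isOpen_preimage _ (isOpen_fiber n b)
  have hcontY : Continuous (fun y (i : ι) => PadicInt.toZModPow n (g i y)) := by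
    apply continuous_pi
    intro i
    rw [continuous_discrete_rng]
    intro b
    exact (g i).continuous.isOpen_preimage _ (isOpen_fiber n b)
  set s : C(X, ι → ZMod (p^n)) := ⟨_, hcontX⟩ with hs
  set t : C(Y, ι → ZMod (p^n)) := ⟨_, hcontY⟩ with ht
  have hdec1 := fun i => decomp (n := n) s (f i) (fun u => u i) (fun z => rfl)
  have hdec2 := fun i => decomp (n := n) t (g i) (fun u => u i) (fun z => rfl)
  choose c hc using hdec1
  choose d hd using hdec2
  set A : ι → C(X, ℤ_[p]) := fun i => ∑ u, zlift p n (u i) • ind p s u with hA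
  set A' : ι → C(Y, ℤ_[p]) := fun i => ∑ v, zlift p n (v i) • ind p t v with hA'
  have step : ∀ i, B (f i) (g i) - B (A i) (A' i) ∈ N := by
    intro i
    have e1 : B (f i) (g i)
        = B (A i) (g i) + (p : ℤ_[p])^n • B (c i) (g i) := by
      conv_lhs => rw [hc i]
      simp [hA, map_add, map_sum, map_smul, LinearMap.add_apply, LinearMap.sum_apply,
        LinearMap.smul_apply]
    have e2 : B (A i) (g i)
        = B (A i) (A' i) + (p : ℤ_[p])^n • B (A i) (d i) := by
      conv_lhs => rw [hd i]
      simp [hA', map_add, map_sum, map_smul, Finset.smul_sum]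
    rw [e1, e2]
    have : B (A i) (A' i) + (p : ℤ_[p])^n • (B (A i)) (d i) +
        (p : ℤ_[p])^n • (B (c i)) (g i) - B (A i) (A' i)
        = (p : ℤ_[p])^n • (B (A i)) (d i) + (p : ℤ_[p])^n • (B (c i)) (g i) := by ring_nf
    rw [this]
    exact add_mem (smul_mem_pow_span _ dvd_rfl) (smul_mem_pow_span _ dvd_rfl)
  have main : (∑ i, B (A i) (A' i)) ∈ N := by
    have expand : ∀ i, B (A i) (A' i)
        = ∑ v, ∑ u, (zlift p n (v i) * zlift p n (u i)) • B (ind p s u) (ind p t v) := by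
      intro i
      rw [hA, hA']
      simp only [map_sum, map_smul, LinearMap.sum_apply, LinearMap.smul_apply,
        Finset.smul_sum, smul_smul]
    simp only [expand]
    rw [Finset.sum_comm]
    apply Submodule.sum_mem
    intro v _
    rw [Finset.sum_comm]
    apply Submodule.sum_mem
    intro u _
    rw [← Finset.sum_smul]
    by_cases hu : ∃ x, s x = u
    · by_cases hv : ∃ y, t y = v
      · obtain ⟨x, hx⟩ := hu
        obtain ⟨y, hy⟩ := hv
        apply smul_mem_pow_span
        rw [← dvd_iff_toZModPow_eq_zero, map_sum]
        have hterm : ∀ i, PadicInt.toZModPow n (zlift p n (v i) * zlift p n (u i))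
            = PadicInt.toZModPow n (f i x * g i y) := by
          intro i
          rw [map_mul, toZModPow_zlift, toZModPow_zlift, ← hx, ← hy]
          show PadicInt.toZModPow n (g i y) * PadicInt.toZModPow n (f i x) = _
          rw [← map_mul, mul_comm]
        rw [Finset.sum_congr rfl (fun i _ => hterm i), ← map_sum,
          dvd_iff_toZModPow_eq_zero]
        exact H x y
      · have hz : ind p t v = 0 := ind_eq_zero t v (by push_neg at hv; exact hv)
        rw [hz]
        simp
    · have hz : ind p s u = 0 := ind_eq_zero s u (by push_neg at hu; exact hu)
      rw [hz]
      simp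
  have : (∑ i, B (f i) (g i))
      = (∑ i, (B (f i) (g i) - B (A i) (A' i))) + ∑ i, B (A i) (A' i) := by
    rw [Finset.sum_sub_distrib]
    ring
  rw [this]
  exact add_mem (Submodule.sum_mem _ fun i _ => step i) main

end Crux

section Density

variable {X Y : Type*}
variable [TopologicalSpace X] [CompactSpace X] [T2Space X] [TotallyDisconnectedSpace X]
variable [TopologicalSpace Y] [CompactSpace Y] [T2Space Y] [TotallyDisconnectedSpace Y]

lemma density (n : ℕ) (h : C(X × Y, ℤ_[p])) :
    ∃ (m : ℕ) (f : Fin m → C(X, ℤ_[p])) (g : Fin m → C(Y, ℤ_[p])) (c : C(X × Y, ℤ_[p])),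
      h = (∑ i, (f i).comp ContinuousMap.fst * (g i).comp ContinuousMap.snd)
          + (p : ℤ_[p])^n • c := by
  letI : TopologicalSpace (ZMod (p^n)) := ⊥
  haveI : DiscreteTopology (ZMod (p^n)) := ⟨rfl⟩
  set k : X × Y → ZMod (p^n) := fun z => PadicInt.toZModPow n (h z) with hk
  have hkc : Continuous k := by
    rw [continuous_discrete_rng]
    intro b
    exact h.continuous.isOpen_preimage _ (isOpen_fiber n b)
  have cover : ∀ z : X × Y, ∃ (U : Set X) (V : Set Y),
      IsClopen U ∧ IsClopen V ∧ z.1 ∈ U ∧ z.2 ∈ V ∧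
      ∀ w : X × Y, w.1 ∈ U → w.2 ∈ V → k w = k z := by
    intro z
    have hopen : IsOpen (k ⁻¹' {k z}) := hkc.isOpen_preimage _ (isOpen_discrete _)
    obtain ⟨U, V, hUo, hVo, hzU, hzV, hUV⟩ :=
      isOpen_prod_iff.mp hopen z.1 z.2 rfl
    obtain ⟨U', hU', hzU', hU'sub⟩ := compact_exists_isClopen_in_isOpen hUo hzU
    obtain ⟨V', hV', hzV', hV'sub⟩ := compact_exists_isClopen_in_isOpen hVo hzV
    refine ⟨U', V', hU', hV', hzU', hzV', fun w hw1 hw2 => ?_⟩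
    exact hUV (Set.mk_mem_prod (hU'sub hw1) (hV'sub hw2))
  choose U V hU hV hz1 hz2 hconst using cover
  have hcov : (Set.univ : Set (X × Y)) ⊆ ⋃ z, U z ×ˢ V z := fun z _ =>
    Set.mem_iUnion.mpr ⟨z, Set.mk_mem_prod (hz1 z) (hz2 z)⟩
  obtain ⟨tt, htt⟩ := isCompact_univ.elim_finite_subcover (fun z => U z ×ˢ V z)
    (fun z => ((hU z).isOpen).prod ((hV z).isOpen)) hcov
  set s : C(X, (↥tt → Bool)) :=
    ⟨fun x w => (U w).boolIndicator x,
      continuous_pi fun w => (continuous_boolIndicator_iff_isClopen _).mpr (hU w)⟩ with hs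
  set t : C(Y, (↥tt → Bool)) :=
    ⟨fun y w => (V w).boolIndicator y,
      continuous_pi fun w => (continuous_boolIndicator_iff_isClopen _).mpr (hV w)⟩ with ht
  set φ : (↥tt → Bool) × (↥tt → Bool) → ZMod (p^n) := fun w =>
    if hx : ∃ x, s x = w.1 then
      (if hy : ∃ y, t y = w.2 then k (hx.choose, hy.choose) else 0) else 0 with hφ
  have hfac : ∀ z : X × Y, k z = φ (s z.1, t z.2) := by
    intro z
    have hx : ∃ x', s x' = s z.1 := ⟨z.1, rfl⟩
    have hy : ∃ y', t y' = t z.2 := ⟨z.2, rfl⟩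
    rw [hφ]
    simp only [dif_pos hx, dif_pos hy]
    obtain ⟨i, hi, hzi⟩ := Set.mem_iUnion₂.mp (htt (Set.mem_univ z))
    have hmx : hx.choose ∈ U i := by
      have h3 : (U i).boolIndicator hx.choose = (U i).boolIndicator z.1 :=
        congrFun hx.choose_spec (⟨i, hi⟩ : ↥tt)
      exact (Set.mem_iff_boolIndicator _ _).mpr
        (h3.trans ((Set.mem_iff_boolIndicator _ _).mp hzi.1))
    have hmy : hy.choose ∈ V i := by
      have h3 : (V i).boolIndicator hy.choose = (V i).boolIndicator z.2 :=
        congrFun hy.choose_spec (⟨i, hi⟩ : ↥tt)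
      exact (Set.mem_iff_boolIndicator _ _).mpr
        (h3.trans ((Set.mem_iff_boolIndicator _ _).mp hzi.2))
    rw [hconst i z hzi.1 hzi.2, hconst i (hx.choose, hy.choose) hmx hmy]
  set st : C(X × Y, (↥tt → Bool) × (↥tt → Bool)) :=
    ⟨fun z => (s z.1, t z.2),
      ((s.continuous.comp continuous_fst).prodMk (t.continuous.comp continuous_snd))⟩ with hst
  obtain ⟨c, hdec⟩ := decomp (n := n) st h φ (fun z => hfac z)
  have hfactor : ∀ w : (↥tt → Bool) × (↥tt → Bool),
      ind p st w = (ind p s w.1).comp ContinuousMap.fst * (ind p t w.2).comp ContinuousMap.snd := by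
    intro w
    ext z
    simp only [ind_apply, ContinuousMap.mul_apply, ContinuousMap.comp_apply,
      ContinuousMap.coe_mk, hst, ContinuousMap.fst_apply, ContinuousMap.snd_apply, Prod.ext_iff]
    by_cases h1 : s z.1 = w.1 <;> by_cases h2 : t z.2 = w.2 <;> simp [ind_apply, h1, h2]
  set m := Fintype.card ((↥tt → Bool) × (↥tt → Bool)) with hm
  set e : Fin m ≃ ((↥tt → Bool) × (↥tt → Bool)) := (Fintype.equivFin _).symm with he
  refine ⟨m, fun i => zlift p n (φ (e i)) • ind p s (e i).1, fun i => ind p t (e i).2, c, ?_⟩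
  rw [hdec]
  congr 1
  rw [← Equiv.sum_comp e (fun w => zlift p n (φ w) • ind p st w)]
  apply Finset.sum_congr rfl
  intro i _
  rw [hfactor (e i), ContinuousMap.smul_comp, smul_mul_assoc]

end Density


section Main

variable {X Y : Type*}
variable [TopologicalSpace X] [CompactSpace X] [T2Space X] [TotallyDisconnectedSpace X]
variable [TopologicalSpace Y] [CompactSpace Y] [T2Space Y] [TotallyDisconnectedSpace Y]
variable {R : Type*} [CommRing R] [Algebra ℤ_[p] R]

lemma agree (B : C(X, ℤ_[p]) →ₗ[ℤ_[p]] C(Y, ℤ_[p]) →ₗ[ℤ_[p]] R)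
    {n : ℕ} {ι ι' : Type} [Fintype ι] [Fintype ι']
    (f : ι → C(X, ℤ_[p])) (g : ι → C(Y, ℤ_[p]))
    (f' : ι' → C(X, ℤ_[p])) (g' : ι' → C(Y, ℤ_[p]))
    (c c' : C(X × Y, ℤ_[p])) (h : C(X × Y, ℤ_[p]))
    (h1 : h = (∑ i, (f i).comp ContinuousMap.fst * (g i).comp ContinuousMap.snd)
      + (p : ℤ_[p])^n • c)
    (h2 : h = (∑ j, (f' j).comp ContinuousMap.fst * (g' j).comp ContinuousMap.snd)
      + (p : ℤ_[p])^n • c') :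
    (∑ i, B (f i) (g i)) - (∑ j, B (f' j) (g' j)) ∈ Ideal.span {(p : R)} ^ n := by
  have key := crux B (ι := ι ⊕ ι') n (Sum.elim f (fun j => -f' j)) (Sum.elim g g') ?_
  · simpa [Fintype.sum_sum_type, sub_eq_add_neg] using key
  · intro x y
    have hcong := ContinuousMap.congr_fun (h1.symm.trans h2) (x, y)
    simp only [ContinuousMap.add_apply, ContinuousMap.sum_apply, ContinuousMap.mul_apply,
      ContinuousMap.comp_apply, ContinuousMap.smul_apply, ContinuousMap.fst_apply,
      ContinuousMap.snd_apply, smul_eq_mul] at hcong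
    rw [Fintype.sum_sum_type]
    simp only [Sum.elim_inl, Sum.elim_inr, ContinuousMap.neg_apply, neg_mul,
      Finset.sum_neg_distrib]
    exact ⟨c' (x, y) - c (x, y), by linear_combination hcong⟩

end Main

end BFM

set_option maxHeartbeats 1000000 in
/-- Let `p` be a prime, `X` and `Y` profinite sets, and `R` a
`p`-adically complete `ℤ_p`-algebra.  For every `ℤ_p`-bilinear pairing
`B : C(X, ℤ_p) × C(Y, ℤ_p) → R` there is a unique `R`-valued measure `μ` on `X × Y`
(i.e. a unique `ℤ_p`-linear map `μ : C(X × Y, ℤ_p) → R`) such that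
`μ ((x,y) ↦ f x * g y) = B f g` for all continuous `f : X → ℤ_p`, `g : Y → ℤ_p`. -/
theorem bilinear_form_to_measure
    (p : ℕ) [Fact p.Prime]
    (X Y : Type*) [TopologicalSpace X] [CompactSpace X] [T2Space X]
    [TotallyDisconnectedSpace X]
    [TopologicalSpace Y] [CompactSpace Y] [T2Space Y] [TotallyDisconnectedSpace Y]
    (R : Type*) [CommRing R] [Algebra ℤ_[p] R]
    [IsAdicComplete (Ideal.span {(p : R)}) R]
    (B : C(X, ℤ_[p]) →ₗ[ℤ_[p]] C(Y, ℤ_[p]) →ₗ[ℤ_[p]] R) :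
    ∃! μ : C(X × Y, ℤ_[p]) →ₗ[ℤ_[p]] R,
      ∀ (f : C(X, ℤ_[p])) (g : C(Y, ℤ_[p])),
        μ (f.comp ContinuousMap.fst * g.comp ContinuousMap.snd) = B f g := by
  classical
  set I : Ideal R := Ideal.span {(p : R)} with hI
  have htop : ∀ n : ℕ, (I ^ n • ⊤ : Submodule R R) = I ^ n := fun n => by
    rw [Ideal.smul_eq_mul, Ideal.mul_top]
  choose m F G c hrep using fun (h : C(X × Y, ℤ_[p])) (n : ℕ) => BFM.density n h
  set v : C(X × Y, ℤ_[p]) → ℕ → R := fun h n => ∑ i, B (F h n i) (G h n i) with hv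
  have hagree : ∀ (h : C(X × Y, ℤ_[p])) (n : ℕ) {ι : Type} [Fintype ι]
      (f : ι → C(X, ℤ_[p])) (g : ι → C(Y, ℤ_[p])) (c' : C(X × Y, ℤ_[p])),
      h = (∑ i, (f i).comp ContinuousMap.fst * (g i).comp ContinuousMap.snd)
        + (p : ℤ_[p])^n • c' →
      v h n - (∑ i, B (f i) (g i)) ∈ I ^ n := by
    intro h n ι _ f g c' hrep'
    exact BFM.agree B (F h n) (G h n) f g (c h n) c' h (hrep h n) hrep'
  have hcauchy : ∀ h : C(X × Y, ℤ_[p]), ∀ {a b : ℕ}, a ≤ b →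
      v h a ≡ v h b [SMOD (I ^ a • ⊤ : Submodule R R)] := by
    intro h a b hab
    rw [SModEq.sub_mem, htop]
    have hrepb : h = (∑ i, ((F h b i).comp ContinuousMap.fst *
        (G h b i).comp ContinuousMap.snd))
        + (p : ℤ_[p])^a • ((p : ℤ_[p])^(b - a) • c h b) := by
      conv_lhs => rw [hrep h b]
      rw [smul_smul, ← pow_add, Nat.add_sub_cancel' hab]
    exact hagree h a (F h b) (G h b) _ hrepb
  have lim : ∀ h, ∃ L : R, ∀ n, v h n ≡ L [SMOD (I ^ n • ⊤ : Submodule R R)] :=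
    fun h => IsPrecomplete.prec inferInstance (fun {a b} hab => hcauchy h hab)
  choose μ₀ hμ₀ using lim
  have charac : ∀ (h : C(X × Y, ℤ_[p])) (n : ℕ) {ι : Type} [Fintype ι]
      (f : ι → C(X, ℤ_[p])) (g : ι → C(Y, ℤ_[p])) (c' : C(X × Y, ℤ_[p])),
      h = (∑ i, (f i).comp ContinuousMap.fst * (g i).comp ContinuousMap.snd)
        + (p : ℤ_[p])^n • c' →
      μ₀ h - (∑ i, B (f i) (g i)) ∈ I ^ n := by
    intro h n ι _ f g c' hr
    have h1 : μ₀ h - v h n ∈ I ^ n := by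
      have h2 := hμ₀ h n
      rw [SModEq.sub_mem, htop] at h2
      simpa [neg_sub] using neg_mem h2
    have h2 := hagree h n f g c' hr
    have h3 : μ₀ h - ∑ i, B (f i) (g i)
        = (μ₀ h - v h n) + (v h n - ∑ i, B (f i) (g i)) := by ring
    rw [h3]; exact add_mem h1 h2
  have haus : ∀ r : R, (∀ n : ℕ, r ∈ I ^ n) → r = 0 := by
    intro r hr
    refine IsHausdorff.haus (inferInstance : IsHausdorff I R) r fun n => ?_
    rw [SModEq.sub_mem, sub_zero, htop]
    exact hr n
  have hsmulmem : ∀ (r : ℤ_[p]) {x : R} (n : ℕ), x ∈ I ^ n → r • x ∈ I ^ n := by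
    intro r x n hx
    rw [Algebra.smul_def]
    exact Ideal.mul_mem_left _ _ hx
  have hadd : ∀ h h', μ₀ (h + h') = μ₀ h + μ₀ h' := by
    intro h h'
    have key : ∀ n : ℕ, μ₀ (h + h') - (μ₀ h + μ₀ h') ∈ I ^ n := by
      intro n
      have hcomb : h + h' = (∑ i : Fin (m h n) ⊕ Fin (m h' n),
          ((Sum.elim (F h n) (F h' n)) i).comp ContinuousMap.fst *
          ((Sum.elim (G h n) (G h' n)) i).comp ContinuousMap.snd)
          + (p : ℤ_[p])^n • (c h n + c h' n) := by
        rw [Fintype.sum_sum_type]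
        simp only [Sum.elim_inl, Sum.elim_inr]
        rw [smul_add]
        conv_lhs => rw [hrep h n, hrep h' n]
        abel
      have h1 := charac (h + h') n _ _ _ hcomb
      have e1 : (∑ i : Fin (m h n) ⊕ Fin (m h' n),
          B (Sum.elim (F h n) (F h' n) i) (Sum.elim (G h n) (G h' n) i))
          = v h n + v h' n := by
        rw [Fintype.sum_sum_type]; simp [hv]
      rw [e1] at h1
      have h2 := hμ₀ h n
      have h3 := hμ₀ h' n
      rw [SModEq.sub_mem, htop] at h2 h3
      have h4 : μ₀ (h + h') - (μ₀ h + μ₀ h')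
          = (μ₀ (h + h') - (v h n + v h' n)) + (v h n - μ₀ h) + (v h' n - μ₀ h') := by
        ring
      rw [h4]
      exact add_mem (add_mem h1 h2) h3
    exact sub_eq_zero.mp (haus _ key)
  have hsmul : ∀ (r : ℤ_[p]) h, μ₀ (r • h) = r • μ₀ h := by
    intro r h
    have key : ∀ n : ℕ, μ₀ (r • h) - r • μ₀ h ∈ I ^ n := by
      intro n
      have hcomb : r • h = (∑ i, ((r • F h n i).comp ContinuousMap.fst) *
          ((G h n i).comp ContinuousMap.snd))
          + (p : ℤ_[p])^n • (r • c h n) := by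
        conv_lhs => rw [hrep h n]
        rw [smul_add, Finset.smul_sum]
        congr 1
        · refine Finset.sum_congr rfl fun i _ => ?_
          rw [ContinuousMap.smul_comp, smul_mul_assoc]
        · rw [smul_comm]
      have h1 := charac (r • h) n _ _ _ hcomb
      have e1 : (∑ i, B (r • F h n i) (G h n i)) = r • v h n := by
        simp [hv, map_smul, Finset.smul_sum]
      rw [e1] at h1
      have h2 := hμ₀ h n
      rw [SModEq.sub_mem, htop] at h2
      have heq : μ₀ (r • h) - r • μ₀ h
          = (μ₀ (r • h) - r • v h n) + (r • v h n - r • μ₀ h) := by ring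
      rw [heq, ← smul_sub]
      exact add_mem h1 (hsmulmem r n h2)
    exact sub_eq_zero.mp (haus _ key)
  set μlin : C(X × Y, ℤ_[p]) →ₗ[ℤ_[p]] R :=
    { toFun := μ₀, map_add' := hadd, map_smul' := hsmul } with hμlin
  have hprop : ∀ (f : C(X, ℤ_[p])) (g : C(Y, ℤ_[p])),
      μlin (f.comp ContinuousMap.fst * g.comp ContinuousMap.snd) = B f g := by
    intro f g
    have key : ∀ n : ℕ,
        μ₀ (f.comp ContinuousMap.fst * g.comp ContinuousMap.snd) - B f g ∈ I ^ n := by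
      intro n
      have hcomb : f.comp ContinuousMap.fst * g.comp ContinuousMap.snd
          = (∑ _i : Fin 1, f.comp ContinuousMap.fst * g.comp ContinuousMap.snd)
            + (p : ℤ_[p])^n • (0 : C(X × Y, ℤ_[p])) := by simp
      have h1 := charac _ n (fun _ : Fin 1 => f) (fun _ : Fin 1 => g) 0 hcomb
      simpa using h1
    exact sub_eq_zero.mp (haus _ key)
  refine ⟨μlin, hprop, ?_⟩
  intro μ' hμ'
  apply LinearMap.ext
  intro h
  have key : ∀ n : ℕ, μ' h - μlin h ∈ I ^ n := by
    intro n
    have hval : ∀ (ν : C(X × Y, ℤ_[p]) →ₗ[ℤ_[p]] R),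
        (∀ f g, ν (f.comp ContinuousMap.fst * g.comp ContinuousMap.snd) = B f g) →
        ν h = v h n + (p : ℤ_[p])^n • ν (c h n) := by
      intro ν hν
      conv_lhs => rw [hrep h n]
      rw [map_add, map_sum, map_smul]
      congr 1
      exact Finset.sum_congr rfl fun i _ => hν _ _
    rw [hval μ' hμ', hval μlin hprop]
    have h5 : (v h n + (p : ℤ_[p])^n • μ' (c h n))
        - (v h n + (p : ℤ_[p])^n • μlin (c h n))
        = (p : ℤ_[p])^n • μ' (c h n) - (p : ℤ_[p])^n • μlin (c h n) := by ring
    rw [h5]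
    exact sub_mem (BFM.smul_mem_pow_span _ dvd_rfl) (BFM.smul_mem_pow_span _ dvd_rfl)
  exact sub_eq_zero.mp (haus _ key)
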